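/- For every k ≥ 3, the sequence e_1 = C(2k-3, 2) - (k-1), e_2 = e_3 = ... = e_k = 1 cannot be realized as the color distribution of a Gallai k-coloring of K_{2k-3}. -/
import Mathlib


/-- An edge coloring of `K_n` (edges = non-diagonal elements of `Sym2 (Fin n)`)
is a Gallai coloring if no triangle receives three pairwise distinct colors. -/
def IsGallai {n : ℕ} {C : Type*} (c : Sym2 (Fin n) → C) : Prop :=
  ∀ a b d : Fin n, a ≠ b → b ≠ d → a ≠ d →
    c s(a, b) = c s(b, d) ∨ c s(b, d) = c s(a, d) ∨ c s(a, b) = c s(a, d)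

/-- The number of edges of `K_n` receiving color `i`. -/
def colorCard {n : ℕ} {C : Type*} [DecidableEq C] (c : Sym2 (Fin n) → C) (i : C) : ℕ :=
  (Finset.univ.filter (fun e : Sym2 (Fin n) => ¬ e.IsDiag ∧ c e = i)).card

/-- For `k ≥ 3`, the distribution `(C(2k-3,2) - (k-1), 1, …, 1)` is not realizable as a
Gallai `k`-coloring of `K_{2k-3}`. -/
theorem no_gallai_lower_bound_distribution (k : ℕ) (hk : 3 ≤ k) :
    ¬ ∃ c : Sym2 (Fin (2 * k - 3)) → Fin k, IsGallai c ∧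
      colorCard c ⟨0, by omega⟩ = (2 * k - 3) * (2 * k - 4) / 2 - (k - 1) ∧
      (∀ i : Fin k, i ≠ ⟨0, by omega⟩ → colorCard c i = 1) := by
  rintro ⟨c, hg, -, h1⟩
  set ci : Fin (k - 1) → Fin k := fun i => ⟨i.1 + 1, by omega⟩ with hci
  have key : ∀ i : Fin (k - 1), ∃ x y : Fin (2 * k - 3), x ≠ y ∧
      c s(x, y) = ci i ∧
      ∀ u v : Fin (2 * k - 3), u ≠ v → c s(u, v) = ci i → s(u, v) = s(x, y) := by
    intro i
    have hi := h1 (ci i) (by simp [hci, Fin.ext_iff])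
    rw [colorCard, Finset.card_eq_one] at hi
    obtain ⟨e, he⟩ := hi
    induction e using Sym2.ind with
    | _ x y =>
      have hmem : s(x, y) ∈ Finset.univ.filter
          (fun e : Sym2 (Fin (2 * k - 3)) => ¬ e.IsDiag ∧ c e = ci i) := by
        rw [he]; exact Finset.mem_singleton_self _
      rw [Finset.mem_filter] at hmem
      refine ⟨x, y, ?_, hmem.2.2, ?_⟩
      · intro h
        exact hmem.2.1 (Sym2.mk_isDiag_iff.mpr h)
      · intro u v huv hc
        have hm : s(u, v) ∈ Finset.univ.filter
            (fun e : Sym2 (Fin (2 * k - 3)) => ¬ e.IsDiag ∧ c e = ci i) :=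
          Finset.mem_filter.mpr ⟨Finset.mem_univ _,
            fun h => huv (Sym2.mk_isDiag_iff.mp h), hc⟩
        rw [he, Finset.mem_singleton] at hm
        exact hm
  choose A B hAB hcol huniq using key
  have rainbow : ∀ (v x y : Fin (2 * k - 3)) (i j : Fin (k - 1)), i ≠ j →
      v ≠ x → v ≠ y → c s(v, x) = ci i → c s(v, y) = ci j → False := by
    intro v x y i j hij hvx hvy hcx hcy
    by_cases hxy : x = y
    · subst hxy
      rw [hcx] at hcy
      exact hij (by ext; simpa [hci, Fin.ext_iff] using hcy)
    · rcases hg x v y (Ne.symm hvx) hvy hxy with h | h | h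
      · rw [Sym2.eq_swap] at h
        rw [hcx, hcy] at h
        exact hij (by ext; simpa [hci, Fin.ext_iff] using h)
      · -- c s(v,y) = c s(x,y), so s(x,y) and s(v,y) both color j
        have h1' := huniq j x y hxy (h ▸ hcy)
        have h2' := huniq j v y hvy hcy
        rw [← h2'] at h1'
        rcases Sym2.eq_iff.mp h1' with ⟨h, -⟩ | ⟨-, h⟩
        · exact hvx h.symm
        · exact hvy h.symm
      · -- c s(x,v) = c s(x,y), both color i
        rw [Sym2.eq_swap] at h
        have h1' := huniq i x y hxy (h ▸ hcx)
        have h2' := huniq i v x hvx hcx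
        rw [← h2'] at h1'
        rcases Sym2.eq_iff.mp h1' with ⟨h', -⟩ | ⟨-, h''⟩
        · exact hvx h'.symm
        · exact hvy h''.symm

  have hinj : Function.Injective
      (fun p : Fin (k - 1) × Bool => if p.2 then A p.1 else B p.1) := by
    rintro ⟨i, s⟩ ⟨j, t⟩ h
    simp only at h
    by_cases hij : i = j
    · subst hij
      rcases s with _ | _ <;> rcases t with _ | _ <;> simp at h ⊢
      · exact absurd h.symm (hAB i)
      · exact absurd h (hAB i)
    · exfalso
      rcases s with _ | _ <;> rcases t with _ | _ <;> simp only [Bool.false_eq_true,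
        if_true, if_false] at h
      · -- B i = B j
        exact rainbow (B i) (A i) (A j) i j hij (Ne.symm (hAB i))
          (h ▸ Ne.symm (hAB j)) (Sym2.eq_swap ▸ hcol i) (by rw [h, Sym2.eq_swap]; exact hcol j)
      · -- B i = A j
        exact rainbow (B i) (A i) (B j) i j hij (Ne.symm (hAB i))
          (h ▸ hAB j) (Sym2.eq_swap ▸ hcol i) (by rw [h]; exact hcol j)
      · -- A i = B j
        exact rainbow (A i) (B i) (A j) i j hij (hAB i)
          (h ▸ Ne.symm (hAB j)) (hcol i) (by rw [h, Sym2.eq_swap]; exact hcol j)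
      · -- A i = A j
        exact rainbow (A i) (B i) (B j) i j hij (hAB i)
          (h ▸ hAB j) (hcol i) (by rw [h]; exact hcol j)
  have := Fintype.card_le_of_injective _ hinj
  simp [Fintype.card_prod] at this
  omega
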